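/- If μ and μ' are two bimultiplication laws covering the same coupling ξ, then μ' = μ + ε∘l for some linear map l: A → K, and their curvatures satisfy R^{μ'} − R^μ = ε∘(Δ^μ(l) + l·l), where Δ^μ(l)(a1⊗a2) = a1·l(a2) − l(a1a2) + l(a1)·a2 and (l·l)(a1⊗a2) = l(a1)l(a2). -/

import Mathlib

/-- A bimultiplication of a (possibly non-unital) associative `F`-algebra `K`. -/
def IsBimul (F : Type*) {K : Type*} [Field F] [NonUnitalRing K] [Module F K]
    [SMulCommClass F K K] [IsScalarTower F K K] (u v : K →ₗ[F] K) : Prop :=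
  (∀ k1 k2 : K, k1 * u k2 = v k1 * k2) ∧
  (∀ k1 k2 : K, u (k1 * k2) = u k1 * k2) ∧
  (∀ k1 k2 : K, v (k1 * k2) = k1 * v k2)

set_option synthInstance.maxHeartbeats 1000000 in
/-- If `μ = (u,v)` and `μ' = (u',v')` are two bimultiplication laws covering
the same coupling `ξ` (i.e. `μ'(a) − μ(a)` is inner for every `a`), then
`μ' = μ + ε ∘ l` for some linear map `l : A → K`, and the curvatures satisfy
`R^{μ'} − R^μ = ε ∘ (Δ^μ(l) + l·l)`, where
`Δ^μ(l)(a₁⊗a₂) = a₁·l(a₂) − l(a₁a₂) + l(a₁)·a₂` and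
`(l·l)(a₁⊗a₂) = l(a₁)l(a₂)`. -/
theorem laws_differ_by_inner
    (F A K : Type*) [Field F]
    [NonUnitalRing A] [Module F A] [SMulCommClass F A A] [IsScalarTower F A A]
    [NonUnitalRing K] [Module F K] [SMulCommClass F K K] [IsScalarTower F K K]
    (u v u' v' : A →ₗ[F] (K →ₗ[F] K))
    (hbim : ∀ a : A, IsBimul F (u a) (v a))
    (hbim' : ∀ a : A, IsBimul F (u' a) (v' a))
    (hsame : ∀ a : A, ∃ k : K,
      u' a = u a + LinearMap.mulLeft F k ∧ v' a = v a + LinearMap.mulRight F k) :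
    ∃ l : A →ₗ[F] K,
      (∀ a : A, u' a = u a + LinearMap.mulLeft F (l a) ∧
        v' a = v a + LinearMap.mulRight F (l a)) ∧
      (∀ a1 a2 : A,
        (u' a1 ∘ₗ u' a2 - u' (a1 * a2)) - (u a1 ∘ₗ u a2 - u (a1 * a2)) =
          LinearMap.mulLeft F
            ((u a1 (l a2) - l (a1 * a2) + v a2 (l a1)) + l a1 * l a2) ∧
        (v' a2 ∘ₗ v' a1 - v' (a1 * a2)) - (v a2 ∘ₗ v a1 - v (a1 * a2)) =
          LinearMap.mulRight F
            ((u a1 (l a2) - l (a1 * a2) + v a2 (l a1)) + l a1 * l a2)) := by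
  classical
  -- the inner bimultiplication map ε : K → End(K) × End(K)
  set ε : K →ₗ[F] (K →ₗ[F] K) × (K →ₗ[F] K) :=
    LinearMap.prod (LinearMap.mul F K) (LinearMap.mul F K).flip with hε
  have hεapply : ∀ k : K, ε k = (LinearMap.mulLeft F k, LinearMap.mulRight F k) := by
    intro k
    ext x <;> simp [hε, LinearMap.mulLeft, LinearMap.mulRight]
  -- the difference φ = μ' - μ : A → End(K) × End(K)
  set φ : A →ₗ[F] (K →ₗ[F] K) × (K →ₗ[F] K) :=
    LinearMap.prod (u' - u) (v' - v) with hφ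
  have hmem : ∀ a : A, φ a ∈ LinearMap.range ε := by
    intro a
    obtain ⟨k, hk1, hk2⟩ := hsame a
    exact ⟨k, by rw [hεapply]; simp [hφ, hk1, hk2]⟩
  -- a linear section of ε on its range (exists since F is a field)
  obtain ⟨s, hs⟩ := (ε.rangeRestrict).exists_rightInverse_of_surjective
    (LinearMap.range_eq_top.mpr ε.surjective_rangeRestrict)
  set ψ : A →ₗ[F] LinearMap.range ε := φ.codRestrict _ hmem with hψ
  refine ⟨s ∘ₗ ψ, ?_, ?_⟩
  · intro a
    have h : ε ((s ∘ₗ ψ) a) = φ a := by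
      have := congrArg (fun f => (f (ψ a) : (K →ₗ[F] K) × (K →ₗ[F] K))) hs
      simpa [hψ] using this
    rw [hεapply] at h
    have h1 := congrArg Prod.fst h
    have h2 := congrArg Prod.snd h
    simp only [hφ, LinearMap.prod_apply, Function.prod, LinearMap.sub_apply] at h1 h2
    constructor
    · rw [h1]; abel
    · rw [h2]; abel
  -- now the curvature computation
  intro a1 a2
  -- setup
  set l : A →ₗ[F] K := s ∘ₗ ψ with hl
  have hla : ∀ a : A, u' a = u a + LinearMap.mulLeft F (l a) ∧
      v' a = v a + LinearMap.mulRight F (l a) := by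
    intro a
    have h : ε (l a) = φ a := by
      have := congrArg (fun f => (f (ψ a) : (K →ₗ[F] K) × (K →ₗ[F] K))) hs
      simpa [hψ, hl] using this
    rw [hεapply] at h
    have h1 := congrArg Prod.fst h
    have h2 := congrArg Prod.snd h
    simp only [hφ, LinearMap.prod_apply, Function.prod, LinearMap.sub_apply] at h1 h2
    constructor
    · rw [h1]; abel
    · rw [h2]; abel
  obtain ⟨hu1, hv1⟩ := hla a1
  obtain ⟨hu2, hv2⟩ := hla a2
  obtain ⟨hu12, hv12⟩ := hla (a1 * a2)
  obtain ⟨hb1a, hb1b, hb1c⟩ := hbim a1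
  obtain ⟨hb2a, hb2b, hb2c⟩ := hbim a2
  constructor
  · ext x
    simp only [hu1, hu2, hu12, LinearMap.sub_apply, LinearMap.comp_apply,
      LinearMap.add_apply, LinearMap.mulLeft_apply, map_add, map_mul]
    have e1 : u a1 (l a2 * x) = u a1 (l a2) * x := hb1b _ _
    have e2 : l a1 * u a2 x = v a2 (l a1) * x := hb2a _ _
    rw [e1, e2]
    noncomm_ring
  · ext x
    simp only [hv1, hv2, hv12, LinearMap.sub_apply, LinearMap.comp_apply,
      LinearMap.add_apply, LinearMap.mulRight_apply, map_add, map_mul]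
    have e1 : v a2 (x * l a1) = x * v a2 (l a1) := hb2c _ _
    have e2 : v a1 x * l a2 = x * u a1 (l a2) := by
      rw [← hb1a]
    rw [e1, e2]
    noncomm_ring
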